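/- Suppose n ≤ 2, X ⊆ ℤ^n, and the program minimize c·x subject to Ax ≥ b, x ∈ X is feasible. Then v^L = v̄*, where v^L = sup_{λ≥0} inf_{x∈X}(c·x + λ·(b−Ax)) and v̄* = inf { c·x : Ax ≥ b, x ∈ closure(conv X) }. -/

import Mathlib

open Matrix Filter Topology

-- continuity of dot product in second arg
lemma dot_cont {n : ℕ} (g : Fin n → ℝ) : Continuous fun y : Fin n → ℝ => g ⬝ᵥ y := by
  unfold dotProduct
  exact continuous_finset_sum _ fun i _ => continuous_const.mul (continuous_apply i)

lemma dot_combo {n : ℕ} (g p q : Fin n → ℝ) (a b : ℝ) :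
    g ⬝ᵥ (a • p + b • q) = a * (g ⬝ᵥ p) + b * (g ⬝ᵥ q) := by
  rw [dotProduct_add, dotProduct_smul, dotProduct_smul]; rfl

-- affine lower bound passes to closure of convex hull
lemma dot_le_closure_hull {n : ℕ} (g : Fin n → ℝ) (ρ : ℝ) (X : Set (Fin n → ℝ))
    (h : ∀ y ∈ X, ρ ≤ g ⬝ᵥ y) {x : Fin n → ℝ} (hx : x ∈ closure (convexHull ℝ X)) :
    ρ ≤ g ⬝ᵥ x := by
  have hconv : Convex ℝ {y : Fin n → ℝ | ρ ≤ g ⬝ᵥ y} := by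
    intro p hp q hq a b ha hb hab
    simp only [Set.mem_setOf_eq] at *
    rw [dot_combo]
    have h1 := mul_le_mul_of_nonneg_left hp ha
    have h2 := mul_le_mul_of_nonneg_left hq hb
    have h3 : a * ρ + b * ρ = ρ := by rw [← add_mul, hab, one_mul]
    linarith
  have hcl : IsClosed {y : Fin n → ℝ | ρ ≤ g ⬝ᵥ y} := isClosed_le continuous_const (dot_cont g)
  exact closure_minimal (convexHull_min h hconv) hcl hx

-- two vectors orthogonal to d in dim ≤ 2 are parallel
lemma orth_parallel {n : ℕ} (hn : n ≤ 2) (d c v : Fin n → ℝ) (hd : d ≠ 0) (hc : c ≠ 0)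
    (hcd : c ⬝ᵥ d = 0) (hvd : v ⬝ᵥ d = 0) : ∃ κ : ℝ, v = κ • c := by
  classical
  set f : (Fin n → ℝ) →ₗ[ℝ] ℝ :=
    { toFun := fun w => w ⬝ᵥ d
      map_add' := fun x y => add_dotProduct x y d
      map_smul' := fun r x => smul_dotProduct r x d } with hf
  have hdd : d ⬝ᵥ d ≠ 0 := fun h => hd (dotProduct_self_eq_zero.mp h)
  have hsurj : Function.Surjective f := by
    intro r
    exact ⟨(r / (d ⬝ᵥ d)) • d, by simp [hf, smul_dotProduct]; field_simp⟩
  have hrange : LinearMap.range f = ⊤ := LinearMap.range_eq_top.mpr hsurj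
  have hrk : Module.finrank ℝ (LinearMap.range f) = 1 := by
    rw [hrange, finrank_top]; exact Module.finrank_self ℝ
  have hker : Module.finrank ℝ (LinearMap.ker f) + 1 = n := by
    have := LinearMap.finrank_range_add_finrank_ker f
    rw [hrk, Module.finrank_fin_fun] at this
    omega
  have hker1 : Module.finrank ℝ (LinearMap.ker f) ≤ 1 := by omega
  have hcker : c ∈ LinearMap.ker f := by simp [hf, LinearMap.mem_ker, hcd]
  have hspan : Submodule.span ℝ {c} = LinearMap.ker f := by
    apply Submodule.eq_of_le_of_finrank_le
    · rw [Submodule.span_le, Set.singleton_subset_iff]; exact hcker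
    · rw [finrank_span_singleton hc]; exact hker1
  have hvker : v ∈ LinearMap.ker f := by simp [hf, LinearMap.mem_ker, hvd]
  rw [← hspan, Submodule.mem_span_singleton] at hvker
  obtain ⟨κ, hκ⟩ := hvker
  exact ⟨κ, hκ.symm⟩

section
variable {m n : ℕ}

-- Key lemma: no asymptotically feasible sequence with value s < ρ can exist (dim ≤ 2)
lemma key_contra (hn : n ≤ 2) (A : Matrix (Fin m) (Fin n) ℝ) (b : Fin m → ℝ)
    (c : Fin n → ℝ) (C : Set (Fin n → ℝ)) (hCcl : IsClosed C)
    (y₀ : Fin n → ℝ) (hy₀C : y₀ ∈ C) (hy₀f : b ≤ A.mulVec y₀)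
    (ρ s : ℝ) (hlb : ∀ x ∈ C, b ≤ A.mulVec x → ρ ≤ c ⬝ᵥ x) (hs : s < ρ)
    (z : ℕ → Fin n → ℝ) (hzC : ∀ j, z j ∈ C) (hzc : ∀ j, c ⬝ᵥ z j = s)
    (v : ℕ → Fin m → ℝ) (hzf : ∀ j i, b i - v j i ≤ A.mulVec (z j) i)
    (hv : Tendsto v atTop (𝓝 0)) : False := by
  classical
  have hrow : ∀ (x : Fin n → ℝ) i, A.mulVec x i = (fun k => A i k) ⬝ᵥ x := fun x i => rfl
  by_cases hbdd : ∃ M : ℝ, ∃ᶠ j in atTop, ‖z j‖ ≤ M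
  · -- bounded case : a subsequence converges to an exactly feasible point of value s < ρ
    obtain ⟨M, hM⟩ := hbdd
    obtain ⟨φ, hφmono, hφ⟩ := extraction_of_frequently_atTop hM
    have hmem : ∀ j, (z ∘ φ) j ∈ Metric.closedBall (0 : Fin n → ℝ) M := by
      intro j; simpa [Metric.mem_closedBall, dist_eq_norm] using hφ j
    obtain ⟨x, -, ψ, hψmono, hlim⟩ :=
      tendsto_subseq_of_bounded Metric.isBounded_closedBall hmem
    have hxC : x ∈ C := hCcl.mem_of_tendsto hlim (Eventually.of_forall fun j => hzC _)
    have hxc : c ⬝ᵥ x = s := by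
      have h1 : Tendsto (fun j => c ⬝ᵥ (z (φ (ψ j)))) atTop (𝓝 (c ⬝ᵥ x)) :=
        ((dot_cont c).tendsto x).comp hlim
      have h2 : (fun j => c ⬝ᵥ (z (φ (ψ j)))) = fun _ => s := by
        funext j; exact hzc _
      rw [h2] at h1
      exact (tendsto_nhds_unique h1 tendsto_const_nhds)
    have hvlim : Tendsto (fun j => v (φ (ψ j))) atTop (𝓝 0) :=
      hv.comp ((hφmono.comp hψmono).tendsto_atTop)
    have hxf : b ≤ A.mulVec x := by
      intro i
      have h1 : Tendsto (fun j => A.mulVec (z (φ (ψ j))) i) atTop (𝓝 (A.mulVec x i)) := by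
        rw [hrow x i]
        exact (((dot_cont (fun k => A i k)).tendsto x).comp hlim)
      have h2 : Tendsto (fun j => b i - v (φ (ψ j)) i) atTop (𝓝 (b i - 0)) :=
        tendsto_const_nhds.sub (((continuous_apply i).tendsto 0).comp hvlim)
      have := le_of_tendsto_of_tendsto' h2 h1 (fun j => hzf _ i)
      simpa using this
    have := hlb x hxC hxf
    linarith [hxc ▸ this]
  · -- unbounded case
    push_neg at hbdd
    have hnorm : ∀ M : ℝ, ∀ᶠ j in atTop, M < ‖z j‖ := by
      intro M
      have := hbdd M
      filter_upwards [this] with j hj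
      exact hj
    set w : ℕ → Fin n → ℝ := fun j => ‖z j‖⁻¹ • z j with hw
    have hwb : ∀ j, w j ∈ Metric.closedBall (0 : Fin n → ℝ) 1 := by
      intro j
      simp only [Metric.mem_closedBall, dist_eq_norm, sub_zero, hw, norm_smul,
        norm_inv, norm_norm]
      rcases eq_or_ne (‖z j‖) 0 with h | h
      · simp [h]
      · rw [inv_mul_cancel₀ h]
    obtain ⟨d, -, φ, hφmono, hdlim⟩ := tendsto_subseq_of_bounded Metric.isBounded_closedBall hwb
    have hφtop : Tendsto φ atTop atTop := hφmono.tendsto_atTop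
    have hNtop : Tendsto (fun j => ‖z (φ j)‖) atTop atTop := by
      rw [tendsto_atTop]
      intro M
      exact (hφtop.eventually (hnorm M)).mono fun j hj => hj.le
    have hNpos : ∀ᶠ j in atTop, 0 < ‖z (φ j)‖ := hφtop.eventually (hnorm 0)
    have hnd : ‖d‖ = 1 := by
      have h1 : Tendsto (fun j => ‖w (φ j)‖) atTop (𝓝 ‖d‖) := hdlim.norm
      have h2 : ∀ᶠ j in atTop, ‖w (φ j)‖ = 1 := by
        filter_upwards [hNpos] with j hj
        simp only [hw, norm_smul, norm_inv, norm_norm]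
        rw [inv_mul_cancel₀ hj.ne']
      exact tendsto_nhds_unique (h1.congr' h2) tendsto_const_nhds
    have hd0 : d ≠ 0 := by intro h; rw [h, norm_zero] at hnd; norm_num at hnd
    -- dot products along the subsequence
    have hdotw : ∀ g : Fin n → ℝ, Tendsto (fun j => g ⬝ᵥ w (φ j)) atTop (𝓝 (g ⬝ᵥ d)) :=
      fun g => ((dot_cont g).tendsto d).comp hdlim
    have hzw : ∀ᶠ j in atTop, ∀ g : Fin n → ℝ, g ⬝ᵥ z (φ j) = ‖z (φ j)‖ * (g ⬝ᵥ w (φ j)) := by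
      filter_upwards [hNpos] with j hj g
      simp only [hw, dotProduct_smul, smul_eq_mul]
      field_simp
    -- c ⬝ᵥ d = 0
    have hcd : c ⬝ᵥ d = 0 := by
      have h1 : Tendsto (fun j => c ⬝ᵥ w (φ j)) atTop (𝓝 (c ⬝ᵥ d)) := hdotw c
      have h2 : ∀ᶠ j in atTop, c ⬝ᵥ w (φ j) = s / ‖z (φ j)‖ := by
        filter_upwards [hzw, hNpos] with j hj hj'
        have := hj c
        rw [hzc] at this
        field_simp
        linarith [this]
      have h3 : Tendsto (fun j => s / ‖z (φ j)‖) atTop (𝓝 0) :=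
        tendsto_const_nhds.div_atTop hNtop
      have h4 : Tendsto (fun j => c ⬝ᵥ w (φ j)) atTop (𝓝 0) :=
        h3.congr' (h2.mono fun j hj => hj.symm)
      exact tendsto_nhds_unique h1 h4
    -- rows have nonnegative dot product with the escape direction d
    have hAd : ∀ i, 0 ≤ (fun k => A i k) ⬝ᵥ d := by
      intro i
      have h1 : Tendsto (fun j => (fun k => A i k) ⬝ᵥ w (φ j)) atTop
          (𝓝 ((fun k => A i k) ⬝ᵥ d)) := hdotw _
      have h2 : Tendsto (fun j => (b i - v (φ j) i) / ‖z (φ j)‖) atTop (𝓝 0) := by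
        have hnum : Tendsto (fun j => b i - v (φ j) i) atTop (𝓝 (b i - 0)) :=
          tendsto_const_nhds.sub (((continuous_apply i).tendsto 0).comp (hv.comp hφtop))
        exact hnum.div_atTop hNtop
      have hineq : ∀ᶠ j in atTop,
          (b i - v (φ j) i) / ‖z (φ j)‖ ≤ (fun k => A i k) ⬝ᵥ w (φ j) := by
        filter_upwards [hNpos, hzw] with j hj hj'
        have h3 : (fun k => A i k) ⬝ᵥ z (φ j) = ‖z (φ j)‖ * ((fun k => A i k) ⬝ᵥ w (φ j)) :=
          hj' _
        have h4 := hzf (φ j) i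
        rw [hrow] at h4
        rw [h3] at h4
        rw [div_le_iff₀ hj]
        linarith
      exact le_of_tendsto_of_tendsto h2 h1 hineq
    by_cases hc0 : c = 0
    · have h1 := hlb y₀ hy₀C hy₀f
      have h2 : s = 0 := by rw [← hzc 0, hc0, zero_dotProduct]
      rw [hc0, zero_dotProduct] at h1
      linarith
    · set δ := d ⬝ᵥ d with hδ
      have hδpos : 0 < δ := by
        have h : (0:ℝ) ≤ δ := Finset.sum_nonneg fun i _ => mul_self_nonneg _
        exact h.lt_of_ne fun h' => hd0 (dotProduct_self_eq_zero.mp h'.symm)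
      have hκ : ∀ i, ∃ κ : ℝ,
          (fun k => A i k) - (((fun k => A i k) ⬝ᵥ d) / δ) • d = κ • c := by
        intro i
        apply orth_parallel hn d c _ hd0 hc0 hcd
        rw [sub_dotProduct, smul_dotProduct, smul_eq_mul]
        field_simp
        rw [← hδ]; ring
      choose κ hκ using hκ
      have hdec : ∀ i (x : Fin n → ℝ), (fun k => A i k) ⬝ᵥ x =
          (((fun k => A i k) ⬝ᵥ d) / δ) * (d ⬝ᵥ x) + κ i * (c ⬝ᵥ x) := by
        intro i x
        have h1 := congrArg (fun u => u ⬝ᵥ x) (hκ i)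
        simp only [sub_dotProduct, smul_dotProduct, smul_eq_mul] at h1
        linarith
      have hdz : Tendsto (fun j => d ⬝ᵥ z (φ j)) atTop atTop := by
        have h1 : Tendsto (fun j => ‖z (φ j)‖ * (d ⬝ᵥ w (φ j))) atTop atTop :=
          Tendsto.atTop_mul_pos hδpos hNtop (hdotw d)
        exact h1.congr' (hzw.mono fun j hj => (hj d).symm)
      have hfeas : ∀ i, ∀ᶠ j in atTop, b i ≤ A.mulVec (z (φ j)) i := by
        intro i
        rcases (hAd i).lt_or_eq with hpos | heq
        · have h1 : Tendsto (fun j => (fun k => A i k) ⬝ᵥ z (φ j)) atTop atTop := by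
            have h2 : Tendsto
                (fun j => (((fun k => A i k) ⬝ᵥ d) / δ) * (d ⬝ᵥ z (φ j)) + κ i * s)
                atTop atTop :=
              tendsto_atTop_add_const_right _ _ (hdz.const_mul_atTop (div_pos hpos hδpos))
            refine h2.congr fun j => ?_
            rw [hdec i (z (φ j)), hzc (φ j)]
          filter_upwards [h1.eventually (eventually_ge_atTop (b i))] with j hj
          rw [hrow]; exact hj
        · have hval : ∀ j, (fun k => A i k) ⬝ᵥ z (φ j) = κ i * s := by
            intro j
            rw [hdec i (z (φ j)), ← heq, hzc]; ring
          have hlim2 : Tendsto (fun j => b i - v (φ j) i) atTop (𝓝 (b i - 0)) :=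
            tendsto_const_nhds.sub (((continuous_apply i).tendsto 0).comp (hv.comp hφtop))
          have hle : b i - 0 ≤ κ i * s := by
            refine le_of_tendsto_of_tendsto' hlim2 tendsto_const_nhds fun j => ?_
            rw [← hval j]
            have := hzf (φ j) i
            rw [hrow] at this
            exact this
          refine Eventually.of_forall fun j => ?_
          rw [hrow, hval j]
          linarith
      have hfeasall : ∀ᶠ j in atTop, b ≤ A.mulVec (z (φ j)) := by
        have := eventually_all.mpr hfeas
        exact this.mono fun j hj => fun i => hj i
      obtain ⟨j, hj⟩ := hfeasall.exists
      have := hlb _ (hzC (φ j)) hj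
      rw [hzc] at this
      linarith

lemma exists_lambda (hn : n ≤ 2) (A : Matrix (Fin m) (Fin n) ℝ) (b : Fin m → ℝ)
    (c : Fin n → ℝ) (C : Set (Fin n → ℝ)) (hCconv : Convex ℝ C) (hCcl : IsClosed C)
    (y₀ : Fin n → ℝ) (hy₀C : y₀ ∈ C) (hy₀f : b ≤ A.mulVec y₀)
    (ρ : ℝ) (hlb : ∀ x ∈ C, b ≤ A.mulVec x → ρ ≤ c ⬝ᵥ x)
    (ε : ℝ) (hε : 0 < ε) :
    ∃ lam : Fin m → ℝ, 0 ≤ lam ∧ ∀ x ∈ C, ρ - ε ≤ c ⬝ᵥ x + lam ⬝ᵥ (b - A.mulVec x) := by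
  classical
  set K : Set ((Fin m → ℝ) × ℝ) :=
    {p | ∃ x ∈ C, (∀ i, b i - A.mulVec x i ≤ p.1 i) ∧ c ⬝ᵥ x ≤ p.2} with hK
  have hcy : ρ ≤ c ⬝ᵥ y₀ := hlb y₀ hy₀C hy₀f
  have hKconv : Convex ℝ K := by
    rintro p ⟨xp, hxp, hp1, hp2⟩ q ⟨xq, hxq, hq1, hq2⟩ a b' ha hb hab
    refine ⟨a • xp + b' • xq, hCconv hxp hxq ha hb hab, fun i => ?_, ?_⟩
    · have h1 : A.mulVec (a • xp + b' • xq) i = a * A.mulVec xp i + b' * A.mulVec xq i := by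
        rw [A.mulVec_add, A.mulVec_smul, A.mulVec_smul]
        simp [smul_eq_mul]
      have h2 := mul_le_mul_of_nonneg_left (hp1 i) ha
      have h3 := mul_le_mul_of_nonneg_left (hq1 i) hb
      have h4 : a * b i + b' * b i = b i := by rw [← add_mul, hab, one_mul]
      simp only [Prod.fst_add, Prod.smul_fst, Pi.add_apply, Pi.smul_apply, smul_eq_mul]
      linarith
    · have h1 : c ⬝ᵥ (a • xp + b' • xq) = a * (c ⬝ᵥ xp) + b' * (c ⬝ᵥ xq) := dot_combo c xp xq a b'
      have h2 := mul_le_mul_of_nonneg_left hp2 ha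
      have h3 := mul_le_mul_of_nonneg_left hq2 hb
      simp only [Prod.snd_add, Prod.smul_snd, smul_eq_mul]
      linarith
  have hnotmem : (((0 : Fin m → ℝ), ρ - ε) : (Fin m → ℝ) × ℝ) ∉ closure K := by
    intro hmem
    rw [mem_closure_iff_seq_limit] at hmem
    obtain ⟨p, hpK, hplim⟩ := hmem
    have hu : Tendsto (fun j => (p j).1) atTop (𝓝 0) := (continuous_fst.tendsto _).comp hplim
    have ht : Tendsto (fun j => (p j).2) atTop (𝓝 (ρ - ε)) := (continuous_snd.tendsto _).comp hplim
    choose x hxC hxfe hxc using hpK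
    set s : ℝ := ρ - ε / 2 with hsdef
    have hsρ : s < ρ := by rw [hsdef]; linarith
    have hts : ∀ᶠ j in atTop, (p j).2 < s := ht.eventually_lt_const (by rw [hsdef]; linarith)
    obtain ⟨J, hJ⟩ := Filter.eventually_atTop.mp hts
    have hxs : ∀ j, c ⬝ᵥ x (j + J) < s := fun j => lt_of_le_of_lt (hxc _) (hJ _ (Nat.le_add_left J j))
    set θ : ℕ → ℝ := fun j => (s - c ⬝ᵥ x (j + J)) / (c ⬝ᵥ y₀ - c ⬝ᵥ x (j + J)) with hθdef
    have hden : ∀ j, 0 < c ⬝ᵥ y₀ - c ⬝ᵥ x (j + J) := fun j => by have := hxs j; linarith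
    have hθpos : ∀ j, 0 < θ j := fun j => div_pos (by have := hxs j; linarith) (hden j)
    have hθle : ∀ j, θ j ≤ 1 := fun j => by
      rw [div_le_one (hden j)]; linarith
    set z : ℕ → Fin n → ℝ := fun j => x (j + J) + θ j • (y₀ - x (j + J)) with hzdef
    have hzC : ∀ j, z j ∈ C := by
      intro j
      have h1 : z j = (1 - θ j) • x (j + J) + θ j • y₀ := by
        rw [hzdef]
        simp only [smul_sub, sub_smul, one_smul]
        abel
      rw [h1]
      exact hCconv (hxC _) hy₀C (by linarith [hθle j]) (hθpos j).le (by ring)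
    have hzc : ∀ j, c ⬝ᵥ z j = s := by
      intro j
      have h6 : θ j * (c ⬝ᵥ y₀ - c ⬝ᵥ x (j + J)) = s - c ⬝ᵥ x (j + J) := by
        simp only [hθdef]
        exact div_mul_cancel₀ _ (hden j).ne'
      rw [hzdef]
      simp only [dotProduct_add, dotProduct_smul, dotProduct_sub, smul_eq_mul]
      linarith
    set v : ℕ → Fin m → ℝ := fun j i => (1 - θ j) * (p (j + J)).1 i with hvdef
    have hzf : ∀ j i, b i - v j i ≤ A.mulVec (z j) i := by
      intro j i
      have h1 : A.mulVec (z j) i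
          = A.mulVec (x (j + J)) i + θ j * (A.mulVec y₀ i - A.mulVec (x (j + J)) i) := by
        rw [hzdef, A.mulVec_add, A.mulVec_smul, A.mulVec_sub]
        simp [smul_eq_mul]
      have h2 := hxfe (j + J) i
      have h3 := hy₀f i
      have h4 : 0 ≤ 1 - θ j := by linarith [hθle j]
      have h5 := mul_le_mul_of_nonneg_left h2 h4
      rw [h1]
      have hv' : v j i = (1 - θ j) * (p (j + J)).1 i := rfl
      rw [hv']
      have h6 := mul_le_mul_of_nonneg_left h3 (hθpos j).le
      nlinarith [hθpos j, hθle j]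
    have hv : Tendsto v atTop (𝓝 0) := by
      rw [tendsto_pi_nhds]
      intro i
      have h1 : Tendsto (fun j => (p (j + J)).1 i) atTop (𝓝 0) := by
        have := ((continuous_apply i).tendsto (0 : Fin m → ℝ)).comp
          (hu.comp (tendsto_add_atTop_nat J))
        simpa [Function.comp_def] using this
      refine squeeze_zero_norm (fun j => ?_) (by simpa using h1.norm)
      have hv' : v j i = (1 - θ j) * (p (j + J)).1 i := rfl
      rw [hv']
      simp only [norm_mul, Real.norm_eq_abs]
      have h2 : |1 - θ j| ≤ 1 := by
        rw [abs_le]; constructor <;> [linarith [hθle j, hθpos j]; linarith [hθpos j]]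
      calc |1 - θ j| * |(p (j + J)).1 i| ≤ 1 * |(p (j + J)).1 i| :=
            mul_le_mul_of_nonneg_right h2 (abs_nonneg _)
        _ = |(p (j + J)).1 i| := one_mul _
    exact key_contra hn A b c C hCcl y₀ hy₀C hy₀f ρ s hlb hsρ z hzC hzc v hzf hv
  obtain ⟨f, u, hfu, hux⟩ :=
    geometric_hahn_banach_closed_point hKconv.closure isClosed_closure hnotmem
  have hfK : ∀ p ∈ K, f p < u := fun p hp => hfu p (subset_closure hp)
  set μ : ℝ := f ((0 : Fin m → ℝ), (1 : ℝ)) with hμdef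
  set φv : Fin m → ℝ := fun i => f ((Pi.single i 1 : Fin m → ℝ), (0 : ℝ)) with hφvdef
  have hlin : ∀ (q : Fin m → ℝ) (t : ℝ), f (q, t) = (∑ i, q i * φv i) + t * μ := by
    intro q t
    have hqt : ((q, t) : (Fin m → ℝ) × ℝ)
        = (∑ i : Fin m, q i • (((Pi.single i 1 : Fin m → ℝ), (0 : ℝ)) : (Fin m → ℝ) × ℝ))
          + t • ((((0 : Fin m → ℝ), (1 : ℝ))) : (Fin m → ℝ) × ℝ) := by
      rw [Prod.ext_iff]
      constructor
      · simp only [Prod.fst_add, Prod.fst_sum, Prod.smul_fst, Prod.smul_snd, smul_zero]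
        rw [show (∑ i : Fin m, q i • (Pi.single i 1 : Fin m → ℝ)) = q from ?_]
        · simp
        · have : ∀ i : Fin m, q i • (Pi.single i 1 : Fin m → ℝ) = Pi.single i (q i) := by
            intro i
            rw [← Pi.single_smul, smul_eq_mul, mul_one]
          rw [Finset.sum_congr rfl fun i _ => this i, Finset.univ_sum_single]
      · simp [Prod.snd_sum]
    rw [hqt, map_add, map_sum]
    simp only [ContinuousLinearMap.map_smul, smul_eq_mul]
    rfl
  have hKy : ∀ (q : Fin m → ℝ), (0 : Fin m → ℝ) ≤ q → ∀ t, c ⬝ᵥ y₀ ≤ t → ((q, t) : (Fin m → ℝ) × ℝ) ∈ K := by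
    intro q hq t htt
    refine ⟨y₀, hy₀C, fun i => ?_, htt⟩
    have h1 := hy₀f i
    have h2 := hq i
    simp only [Pi.zero_apply] at h2
    linarith
  have hcyu : (c ⬝ᵥ y₀) * μ < u := by
    have h1 := hfK _ (hKy 0 le_rfl _ le_rfl)
    rw [hlin] at h1
    simpa using h1
  have hμ0 : μ ≤ 0 := by
    by_contra h
    push_neg at h
    have hdiv : 0 < (u - (c ⬝ᵥ y₀) * μ) / μ := div_pos (by linarith) h
    have h1 := hfK _ (hKy 0 le_rfl (c ⬝ᵥ y₀ + ((u - (c ⬝ᵥ y₀) * μ) / μ + 1)) (by linarith))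
    rw [hlin] at h1
    simp only [Pi.zero_apply, zero_mul, Finset.sum_const_zero, zero_add] at h1
    have h2 : ((u - (c ⬝ᵥ y₀) * μ) / μ) * μ = u - (c ⬝ᵥ y₀) * μ := div_mul_cancel₀ _ h.ne'
    have h5 : (c ⬝ᵥ y₀ + ((u - (c ⬝ᵥ y₀) * μ) / μ + 1)) * μ
        = (c ⬝ᵥ y₀) * μ + ((u - (c ⬝ᵥ y₀) * μ) / μ) * μ + μ := by ring
    rw [h5, h2] at h1
    linarith
  have hφ0 : ∀ i, φv i ≤ 0 := by
    intro i
    by_contra h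
    push_neg at h
    have hdiv : 0 < (u - (c ⬝ᵥ y₀) * μ) / φv i := div_pos (by linarith) h
    obtain ⟨R, hRdef⟩ : ∃ R : ℝ, R = (u - (c ⬝ᵥ y₀) * μ) / φv i + 1 := ⟨_, rfl⟩
    have hR0 : 0 < R := by rw [hRdef]; linarith
    have hmem : (((Pi.single i R : Fin m → ℝ), c ⬝ᵥ y₀) : (Fin m → ℝ) × ℝ) ∈ K := by
      apply hKy
      · intro k
        classical
        rw [Pi.single_apply]
        split <;> simp [hR0.le]
      · exact le_rfl
    have h1 := hfK _ hmem
    rw [hlin] at h1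
    have h2 : (∑ k, (Pi.single i R : Fin m → ℝ) k * φv k) = R * φv i := by
      rw [Finset.sum_eq_single i]
      · simp
      · intro k _ hk
        rw [Pi.single_apply, if_neg hk, zero_mul]
      · intro hk
        exact absurd (Finset.mem_univ i) hk
    rw [h2] at h1
    have h3 : ((u - (c ⬝ᵥ y₀) * μ) / φv i) * φv i = u - (c ⬝ᵥ y₀) * μ := div_mul_cancel₀ _ h.ne'
    have h4 : R * φv i = ((u - (c ⬝ᵥ y₀) * μ) / φv i) * φv i + φv i := by rw [hRdef]; ring
    rw [h3] at h4
    linarith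
  have hμneg : μ < 0 := by
    rcases hμ0.lt_or_eq with h | h
    · exact h
    · exfalso
      have h1 : u < 0 := by
        have := hux
        rw [hlin] at this
        simp only [Pi.zero_apply, zero_mul, Finset.sum_const_zero, zero_add, h, mul_zero] at this
        exact this
      rw [h, mul_zero] at hcyu
      linarith
  set lam : Fin m → ℝ := fun i => φv i / μ with hlamdef
  have hlam : (0 : Fin m → ℝ) ≤ lam := by
    intro i
    have h9 : (0:ℝ) ≤ φv i / μ := by
      rw [div_nonneg_iff]
      right
      exact ⟨hφ0 i, hμ0⟩
    simpa [hlamdef] using h9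
  refine ⟨lam, hlam, fun x hx => ?_⟩
  have hxK : (((fun i => b i - A.mulVec x i) : Fin m → ℝ), c ⬝ᵥ x) ∈ K :=
    ⟨x, hx, fun i => le_rfl, le_rfl⟩
  have h1 := hfK _ hxK
  rw [hlin] at h1
  have h2 : u < (ρ - ε) * μ := by
    have := hux
    rw [hlin] at this
    simp only [Pi.zero_apply, zero_mul, Finset.sum_const_zero, zero_add] at this
    exact this
  have h3 : (∑ i, (b i - A.mulVec x i) * φv i) = μ * (lam ⬝ᵥ (b - A.mulVec x)) := by
    unfold dotProduct
    rw [Finset.mul_sum]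
    refine Finset.sum_congr rfl fun i _ => ?_
    rw [hlamdef]
    simp only [Pi.sub_apply]
    field_simp [hμneg.ne]
  rw [h3] at h1
  by_contra hcon
  push_neg at hcon
  have h4 := mul_lt_mul_of_neg_left hcon hμneg
  nlinarith

end

theorem geoffrion_dim_le_two {m n : ℕ} (hn : n ≤ 2)
    (A : Matrix (Fin m) (Fin n) ℝ) (b : Fin m → ℝ) (c : Fin n → ℝ)
    (X : Set (Fin n → ℝ))
    (hX : X ⊆ {x : Fin n → ℝ | ∀ i, ∃ z : ℤ, x i = (z : ℝ)})
    (hfeas : ∃ x ∈ X, b ≤ A.mulVec x) :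
    sSup ((fun lam =>
        sInf ((fun x => ((c ⬝ᵥ x + lam ⬝ᵥ (b - A.mulVec x) : ℝ) : EReal)) '' X)) ''
          {lam : Fin m → ℝ | 0 ≤ lam}) =
      sInf ((fun x => ((c ⬝ᵥ x : ℝ) : EReal)) ''
        {x ∈ closure (convexHull ℝ X) | b ≤ A.mulVec x}) := by
  classical
  obtain ⟨y₀, hy₀X, hy₀f⟩ := hfeas
  have hXC : X ⊆ closure (convexHull ℝ X) :=
    (subset_convexHull ℝ X).trans subset_closure
  have hy₀C : y₀ ∈ closure (convexHull ℝ X) := hXC hy₀X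
  have hLdecomp : ∀ (lam : Fin m → ℝ) (y : Fin n → ℝ),
      c ⬝ᵥ y + lam ⬝ᵥ (b - A.mulVec y) = (c - lam ᵥ* A) ⬝ᵥ y + lam ⬝ᵥ b := by
    intro lam y
    rw [dotProduct_sub, dotProduct_mulVec, sub_dotProduct]
    ring
  apply le_antisymm
  · -- weak duality
    apply sSup_le
    rintro a ⟨lam, hlam, rfl⟩
    apply le_sInf
    rintro b' ⟨x, ⟨hxC, hxf⟩, rfl⟩
    beta_reduce
    simp only [Set.mem_setOf_eq] at hlam
    rcases eq_or_ne (sInf ((fun y => ((c ⬝ᵥ y + lam ⬝ᵥ (b - A.mulVec y) : ℝ) : EReal)) '' X)) ⊥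
      with h | h
    · rw [h]; exact bot_le
    · have hIy : sInf ((fun y => ((c ⬝ᵥ y + lam ⬝ᵥ (b - A.mulVec y) : ℝ) : EReal)) '' X)
          ≤ ((c ⬝ᵥ y₀ + lam ⬝ᵥ (b - A.mulVec y₀) : ℝ) : EReal) :=
        sInf_le ⟨y₀, hy₀X, rfl⟩
      have hIt : sInf ((fun y => ((c ⬝ᵥ y + lam ⬝ᵥ (b - A.mulVec y) : ℝ) : EReal)) '' X) ≠ ⊤ :=
        ne_top_of_le_ne_top (EReal.coe_ne_top _) hIy
      obtain ⟨ρ, hρ⟩ : ∃ ρ : ℝ,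
          sInf ((fun y => ((c ⬝ᵥ y + lam ⬝ᵥ (b - A.mulVec y) : ℝ) : EReal)) '' X) = (ρ : EReal) :=
        ⟨_, (EReal.coe_toReal hIt h).symm⟩
      rw [hρ]
      have hlow : ∀ y ∈ X, ρ - lam ⬝ᵥ b ≤ (c - lam ᵥ* A) ⬝ᵥ y := by
        intro y hy
        have h1 : (ρ : EReal) ≤ ((c ⬝ᵥ y + lam ⬝ᵥ (b - A.mulVec y) : ℝ) : EReal) := by
          rw [← hρ]; exact sInf_le ⟨y, hy, rfl⟩
        have h2 := EReal.coe_le_coe_iff.mp h1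
        rw [hLdecomp lam y] at h2
        linarith
      have h3 := dot_le_closure_hull (c - lam ᵥ* A) (ρ - lam ⬝ᵥ b) X hlow hxC
      have h4 : lam ⬝ᵥ (b - A.mulVec x) ≤ 0 := by
        apply Finset.sum_nonpos
        intro i _
        have h5 := hlam i
        have h6 := hxf i
        simp only [Pi.sub_apply]
        have : b i - A.mulVec x i ≤ 0 := by linarith
        exact mul_nonpos_of_nonneg_of_nonpos h5 this
      rw [EReal.coe_le_coe_iff]
      have h7 := hLdecomp lam x
      linarith
  · -- strong duality
    have hCconv : Convex ℝ (closure (convexHull ℝ X)) := (convex_convexHull ℝ X).closure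
    have hCcl : IsClosed (closure (convexHull ℝ X)) := isClosed_closure
    have hrle : sInf ((fun x => ((c ⬝ᵥ x : ℝ) : EReal)) ''
          {x ∈ closure (convexHull ℝ X) | b ≤ A.mulVec x}) ≤ ((c ⬝ᵥ y₀ : ℝ) : EReal) :=
      sInf_le ⟨y₀, ⟨hy₀C, hy₀f⟩, rfl⟩
    have hne : sInf ((fun x => ((c ⬝ᵥ x : ℝ) : EReal)) ''
          {x ∈ closure (convexHull ℝ X) | b ≤ A.mulVec x}) ≠ ⊤ :=
      ne_top_of_le_ne_top (EReal.coe_ne_top _) hrle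
    rcases eq_or_ne (sInf ((fun x => ((c ⬝ᵥ x : ℝ) : EReal)) ''
          {x ∈ closure (convexHull ℝ X) | b ≤ A.mulVec x})) ⊥ with hb | hb
    · rw [hb]; exact bot_le
    · obtain ⟨ρ, hρ⟩ : ∃ ρ : ℝ, sInf ((fun x => ((c ⬝ᵥ x : ℝ) : EReal)) ''
          {x ∈ closure (convexHull ℝ X) | b ≤ A.mulVec x}) = (ρ : EReal) :=
        ⟨_, (EReal.coe_toReal hne hb).symm⟩
      rw [hρ]
      have hlb : ∀ x ∈ closure (convexHull ℝ X), b ≤ A.mulVec x → ρ ≤ c ⬝ᵥ x := by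
        intro x hx hfx
        have h1 : (ρ : EReal) ≤ ((c ⬝ᵥ x : ℝ) : EReal) := by
          rw [← hρ]; exact sInf_le ⟨x, ⟨hx, hfx⟩, rfl⟩
        exact EReal.coe_le_coe_iff.mp h1
      have hε2 : ∀ ε : ℝ, 0 < ε → ((ρ - ε : ℝ) : EReal) ≤
          sSup ((fun lam =>
            sInf ((fun x => ((c ⬝ᵥ x + lam ⬝ᵥ (b - A.mulVec x) : ℝ) : EReal)) '' X)) ''
              {lam : Fin m → ℝ | 0 ≤ lam}) := by
        intro ε hε
        obtain ⟨lam, hlam, hbound⟩ := exists_lambda hn A b c (closure (convexHull ℝ X))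
          hCconv hCcl y₀ hy₀C hy₀f ρ hlb ε hε
        refine le_trans ?_ (le_sSup ⟨lam, hlam, rfl⟩)
        apply le_sInf
        rintro a ⟨y, hy, rfl⟩
        beta_reduce
        exact EReal.coe_le_coe_iff.mpr (hbound y (hXC hy))
      by_contra hcon
      push_neg at hcon
      have h1 := hε2 1 one_pos
      have hst : sSup ((fun lam =>
            sInf ((fun x => ((c ⬝ᵥ x + lam ⬝ᵥ (b - A.mulVec x) : ℝ) : EReal)) '' X)) ''
              {lam : Fin m → ℝ | 0 ≤ lam}) ≠ ⊤ := by
        intro h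
        rw [h] at hcon
        exact not_top_lt hcon
      have hsb : sSup ((fun lam =>
            sInf ((fun x => ((c ⬝ᵥ x + lam ⬝ᵥ (b - A.mulVec x) : ℝ) : EReal)) '' X)) ''
              {lam : Fin m → ℝ | 0 ≤ lam}) ≠ ⊥ := by
        intro h
        rw [h] at h1
        exact absurd h1 (not_le.mpr (EReal.bot_lt_coe _))
      obtain ⟨σ, hσ⟩ : ∃ σ : ℝ, sSup ((fun lam =>
            sInf ((fun x => ((c ⬝ᵥ x + lam ⬝ᵥ (b - A.mulVec x) : ℝ) : EReal)) '' X)) ''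
              {lam : Fin m → ℝ | 0 ≤ lam}) = (σ : EReal) :=
        ⟨_, (EReal.coe_toReal hst hsb).symm⟩
      rw [hσ] at hcon hε2
      have hσρ : σ < ρ := EReal.coe_lt_coe_iff.mp hcon
      have h2 := EReal.coe_le_coe_iff.mp (hε2 ((ρ - σ)/2) (by linarith))
      linarith
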